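/- Let D₁, D₂ be two closed disks in the plane whose boundaries both pass through two distinct points p and q, and let D be a third closed disk through p and q whose center lies strictly between the centers of D₁ and D₂ on the perpendicular bisector of pq. Then D ⊆ D₁ ∪ D₂. -/

import Mathlib

open Real

abbrev E2 := EuclideanSpace ℝ (Fin 2)

private lemma power_affine (p x a : E2) :
    dist x a ^ 2 - dist a p ^ 2
      = ‖x‖ ^ 2 - ‖p‖ ^ 2 + 2 * inner ℝ (p - x) a := by
  rw [dist_eq_norm, dist_eq_norm, norm_sub_sq_real, norm_sub_sq_real,
    inner_sub_left]
  ring_nf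
  linarith [real_inner_comm a p, real_inner_comm x a]

theorem pencil_of_circles_containment (p q c c₁ c₂ : E2) (hpq : p ≠ q)
    (h₁ : dist c₁ p = dist c₁ q) (h₂ : dist c₂ p = dist c₂ q)
    (hc : dist c p = dist c q)
    (hbtw : Sbtw ℝ c₁ c c₂) :
    Metric.closedBall c (dist c p) ⊆
      Metric.closedBall c₁ (dist c₁ p) ∪ Metric.closedBall c₂ (dist c₂ p) := by
  intro x hx
  simp only [Metric.mem_closedBall] at hx
  obtain ⟨t, ⟨ht0, ht1⟩, hmap⟩ := hbtw.wbtw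
  have hcc : c = (1 - t) • c₁ + t • c₂ := by
    rw [← hmap]
    simp [AffineMap.lineMap_apply, vsub_eq_sub, vadd_eq_add, smul_sub]
    module
  have hx2 : dist x c ^ 2 - dist c p ^ 2 ≤ 0 := by
    have := pow_le_pow_left₀ dist_nonneg hx 2
    linarith
  have hsplit : dist x c ^ 2 - dist c p ^ 2
      = (1 - t) * (dist x c₁ ^ 2 - dist c₁ p ^ 2)
        + t * (dist x c₂ ^ 2 - dist c₂ p ^ 2) := by
    rw [power_affine, power_affine, power_affine, hcc, inner_add_right,
      real_inner_smul_right, real_inner_smul_right]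
    ring
  have hone : dist x c₁ ^ 2 - dist c₁ p ^ 2 ≤ 0 ∨
      dist x c₂ ^ 2 - dist c₂ p ^ 2 ≤ 0 := by
    by_contra h
    push_neg at h
    have hA := h.1
    have hB := h.2
    set A := dist x c₁ ^ 2 - dist c₁ p ^ 2
    set B := dist x c₂ ^ 2 - dist c₂ p ^ 2
    have hm : 0 < min A B := lt_min hA hB
    have h1 : (1 - t) * min A B ≤ (1 - t) * A :=
      mul_le_mul_of_nonneg_left (min_le_left _ _) (by linarith)
    have h2 : t * min A B ≤ t * B :=
      mul_le_mul_of_nonneg_left (min_le_right _ _) ht0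
    nlinarith
  rcases hone with h | h
  · left
    simp only [Metric.mem_closedBall]
    nlinarith [dist_nonneg (x := x) (y := c₁), dist_nonneg (x := c₁) (y := p)]
  · right
    simp only [Metric.mem_closedBall]
    nlinarith [dist_nonneg (x := x) (y := c₂), dist_nonneg (x := c₂) (y := p)]
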